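/- arXiv:2407.21785 — 2 statements merged into one kernel-verified Lean document; each statement's English description precedes it below -/
import Mathlib

section
/- For any local security condition f, any secure restaking graph G, and any coalition of services C ⊆ S such that f(C, G) = 1, there exists a secure C-local variant G' of G such that R_0(C, G') = 1 (where R_0(C, G') is defined over all valid cascades of attacks, not only stable ones). -/
/-- A restaking graph `G = (S, V, E, π, σ, α)` whose services and validators are
drawn from ambient universes `𝒮` and `𝒱` (so that different graphs over the
same universes can be compared, e.g. to form `C`-local variants). -/
structure RestakingGraph (𝒮 𝒱 : Type) where
  /-- services -/
  S : Set 𝒮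
  /-- validators -/
  V : Set 𝒱
  finS : S.Finite
  finV : V.Finite
  /-- edge relation: `E s v` means validator `v` restakes for service `s` -/
  E : 𝒮 → 𝒱 → Prop
  E_mem : ∀ s v, E s v → s ∈ S ∧ v ∈ V
  /-- profit from corruption -/
  pi : 𝒮 → ℝ
  /-- stake -/
  stake : 𝒱 → ℝ
  /-- attack thresholds -/
  alpha : 𝒮 → ℝ
  pi_nonneg : ∀ s ∈ S, 0 ≤ pi s
  stake_nonneg : ∀ v ∈ V, 0 ≤ stake v
  alpha_pos : ∀ s ∈ S, 0 < alpha s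
  alpha_le_one : ∀ s ∈ S, alpha s ≤ 1

namespace RestakingGraph

variable {𝒮 𝒱 : Type} (G : RestakingGraph 𝒮 𝒱)

/-- `π_A = Σ_{s ∈ A} π_s` -/
noncomputable def piSum (A : Set 𝒮) : ℝ := ∑ᶠ s ∈ A, G.pi s

/-- `σ_B = Σ_{v ∈ B} σ_v` -/
noncomputable def stakeSum (B : Set 𝒱) : ℝ := ∑ᶠ v ∈ B, G.stake v

/-- `N(s)`: validators adjacent to service `s` -/
def Ns (s : 𝒮) : Set 𝒱 := {v | G.E s v}

/-- `N(v)`: services adjacent to validator `v` -/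
def Nv (v : 𝒱) : Set 𝒮 := {s | G.E s v}

/-- `N(C)`: validators adjacent to some service of `C` -/
def NC (C : Set 𝒮) : Set 𝒱 := ⋃ s ∈ C, G.Ns s

/-- `Γ(C)`: validators (of `G`) exclusive to `C` -/
def Gamma (C : Set 𝒮) : Set 𝒱 := {v ∈ G.V | G.Nv v ⊆ C}

/-- `(A, B)` is an attacking coalition on `G ↘ D` (for `D = ∅`, on `G` itself). -/
def IsCoalition (D : Set 𝒱) (A : Set 𝒮) (B : Set 𝒱) : Prop :=
  A ⊆ G.S ∧ B ⊆ G.V ∧ Disjoint B D ∧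
    ∀ s ∈ A, G.alpha s * G.stakeSum (G.Ns s \ D) ≤ G.stakeSum (B ∩ G.Ns s)

/-- `(A, B)` is a valid attack on `G ↘ D`. -/
def IsValidAttack (D : Set 𝒱) (A : Set 𝒮) (B : Set 𝒱) : Prop :=
  G.IsCoalition D A B ∧ G.stakeSum B < G.piSum A

/-- `G` is secure: no valid attack exists. -/
def Secure : Prop := ∀ A B, ¬ G.IsValidAttack ∅ A B

/-- `B_1 ∪ ⋯ ∪ B_{t-1}`: the validators removed before step `t`. -/
def prevUnion {T : ℕ} (B : Fin T → Set 𝒱) (t : Fin T) : Set 𝒱 :=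
  ⋃ i : Fin T, ⋃ _ : i < t, B i

/-- `(A_1, B_1), …, (A_T, B_T)` is a valid cascade of attacks on `G ↘ D`. -/
def IsCascade (D : Set 𝒱) {T : ℕ} (A : Fin T → Set 𝒮) (B : Fin T → Set 𝒱) : Prop :=
  (∀ i j, i ≠ j → Disjoint (A i) (A j)) ∧
  (∀ i j, i ≠ j → Disjoint (B i) (B j)) ∧
  ∀ t, G.IsValidAttack (D ∪ prevUnion B t) (A t) (B t)

/-- `R_ψ(C, G)`: local worst-case stake loss for the coalition `C`, over all
valid cascades of attacks (not only stable ones). -/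
noncomputable def Rloc (C : Set 𝒮) (ψ : ℝ) : ℝ :=
  ψ + sSup { r : ℝ |
    ∃ (D : Set 𝒱) (T : ℕ) (A : Fin T → Set 𝒮) (B : Fin T → Set 𝒱),
      D ⊆ G.V ∧ G.stakeSum (D ∩ G.Gamma C) / G.stakeSum (G.Gamma C) ≤ ψ ∧
      G.IsCascade D A B ∧
      r = G.stakeSum ((⋃ t, B t) ∩ G.Gamma C) / G.stakeSum (G.Gamma C) }

/-- `(X, Y)` is an attack header on `G`. -/
def IsAttackHeader (X : Set 𝒮) (Y : Set 𝒱) : Prop :=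
  X ⊆ G.S ∧ Y ⊆ G.Gamma X ∧
    ∃ B : Set 𝒱, B ⊆ G.V ∧ B ∩ G.Gamma X = ∅ ∧ G.IsCoalition ∅ X (B ∪ Y)

/-- `G'` is a `C`-local variant of `G`: `C` cannot distinguish `G'` from `G`
on the basis of local information. -/
def IsLocalVariant (C : Set 𝒮) (G G' : RestakingGraph 𝒮 𝒱) : Prop :=
  C ⊆ G'.S ∧ G.NC C = G'.NC C ∧
    (∀ s ∈ C, G.pi s = G'.pi s ∧ G.alpha s = G'.alpha s) ∧
    (∀ v ∈ G.NC C, G.stake v = G'.stake v ∧ G.Nv v = G'.Nv v)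

/-- `f` is a local security condition: it cannot distinguish a graph from any
of its `C`-local variants. -/
def IsLocalCondition (f : Set 𝒮 → RestakingGraph 𝒮 𝒱 → Prop) : Prop :=
  ∀ (C : Set 𝒮) (G G' : RestakingGraph 𝒮 𝒱), C ⊆ G.S →
    IsLocalVariant C G G' → (f C G ↔ f C G')

end RestakingGraph



section helpers
variable {α : Type*}

lemma fs_mono (f : α → ℝ) {s t : Set α} (hst : s ⊆ t) (ht : t.Finite)
    (hf : ∀ a ∈ t, 0 ≤ f a) : ∑ᶠ a ∈ s, f a ≤ ∑ᶠ a ∈ t, f a := by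
  have hs : s.Finite := ht.subset hst
  rw [← hs.coe_toFinset, ← ht.coe_toFinset, finsum_mem_coe_finset, finsum_mem_coe_finset]
  refine Finset.sum_le_sum_of_subset_of_nonneg ?_ ?_
  · intro x hx
    simp only [Set.Finite.mem_toFinset] at *
    exact hst hx
  · intro x hx _
    exact hf x (ht.mem_toFinset.1 hx)

lemma fs_nonneg (f : α → ℝ) {s : Set α} (hs : s.Finite)
    (hf : ∀ a ∈ s, 0 ≤ f a) : 0 ≤ ∑ᶠ a ∈ s, f a := by
  have := fs_mono f (Set.empty_subset s) hs hf
  rwa [finsum_mem_empty] at this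

lemma fs_single_le (f : α → ℝ) {s : Set α} (hs : s.Finite) {a : α} (ha : a ∈ s)
    (hf : ∀ x ∈ s, 0 ≤ f x) : f a ≤ ∑ᶠ x ∈ s, f x := by
  have := fs_mono f (Set.singleton_subset_iff.2 ha) hs hf
  rwa [finsum_mem_singleton] at this

end helpers

namespace RestakingGraph

variable {𝒮 𝒱 : Type}

lemma stakeSum_nonneg' (G : RestakingGraph 𝒮 𝒱) {B : Set 𝒱} (hB : B ⊆ G.V) :
    0 ≤ G.stakeSum B :=
  fs_nonneg _ (G.finV.subset hB) (fun v hv => G.stake_nonneg v (hB hv))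

lemma piSum_nonneg' (G : RestakingGraph 𝒮 𝒱) {A : Set 𝒮} (hA : A ⊆ G.S) :
    0 ≤ G.piSum A :=
  fs_nonneg _ (G.finS.subset hA) (fun s hs => G.pi_nonneg s (hA hs))

open Classical in
/-- The variant graph. -/
noncomputable def variant (G : RestakingGraph 𝒮 𝒱) (C : Set 𝒮) (t : 𝒮) (w u : 𝒱)
    (ht : t ∉ G.S) (hw : w ∉ G.V) (hu : u ∉ G.V) (huw : u ≠ w) :
    RestakingGraph 𝒮 𝒱 where
  S := insert t G.S
  V := insert w (insert u G.V)
  finS := G.finS.insert t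
  finV := (G.finV.insert u).insert w
  E := fun s v => G.E s v ∨ (s = t ∧ v = w)
  E_mem := by
    rintro s v (h | ⟨rfl, rfl⟩)
    · exact ⟨Set.mem_insert_of_mem _ (G.E_mem s v h).1,
        Set.mem_insert_of_mem _ (Set.mem_insert_of_mem _ (G.E_mem s v h).2)⟩
    · exact ⟨Set.mem_insert _ _, Set.mem_insert _ _⟩
  pi := Function.update G.pi t (G.stakeSum (G.Gamma C) + 2)
  stake := Function.update (Function.update G.stake u 1) w
    (G.piSum G.S + G.stakeSum (G.Gamma C) + 3)
  alpha := Function.update G.alpha t 1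
  pi_nonneg := by
    have hg0 : 0 ≤ G.stakeSum (G.Gamma C) := G.stakeSum_nonneg' (fun v hv => hv.1)
    rintro s hs
    rcases eq_or_ne s t with rfl | hst
    · rw [Function.update_self]; linarith
    · rw [Function.update_of_ne hst]
      exact G.pi_nonneg s ((Set.mem_insert_iff.1 hs).resolve_left hst)
  stake_nonneg := by
    have hg0 : 0 ≤ G.stakeSum (G.Gamma C) := G.stakeSum_nonneg' (fun v hv => hv.1)
    have hP0 : 0 ≤ G.piSum G.S := G.piSum_nonneg' subset_rfl
    rintro v hv
    rcases eq_or_ne v w with rfl | hvw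
    · rw [Function.update_self]; linarith
    · rw [Function.update_of_ne hvw]
      rcases eq_or_ne v u with rfl | hvu
      · rw [Function.update_self]; norm_num
      · rw [Function.update_of_ne hvu]
        have : v ∈ G.V := by
          rcases Set.mem_insert_iff.1 hv with rfl | hv'
          · exact absurd rfl hvw
          · exact (Set.mem_insert_iff.1 hv').resolve_left hvu
        exact G.stake_nonneg v this
  alpha_pos := by
    rintro s hs
    rcases eq_or_ne s t with rfl | hst
    · rw [Function.update_self]; norm_num
    · rw [Function.update_of_ne hst]
      exact G.alpha_pos s ((Set.mem_insert_iff.1 hs).resolve_left hst)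
  alpha_le_one := by
    rintro s hs
    rcases eq_or_ne s t with rfl | hst
    · rw [Function.update_self]
    · rw [Function.update_of_ne hst]
      exact G.alpha_le_one s ((Set.mem_insert_iff.1 hs).resolve_left hst)

end RestakingGraph

open Classical RestakingGraph in
/-- Theorem: impossibility of local security conditions.
For any local security condition `f`, any secure restaking graph `G`, and any
coalition of services `C ⊆ S` with `f(C, G) = 1`, there is a secure `C`-local
variant `G'` of `G` such that `R_0(C, G') = 1` (over all valid cascades). The
ambient universes are assumed infinite, so that fresh services and validators
are always available. -/
theorem local_condition_impossible {𝒮 𝒱 : Type} [Infinite 𝒮] [Infinite 𝒱]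
    (f : Set 𝒮 → RestakingGraph 𝒮 𝒱 → Prop)
    (hf : RestakingGraph.IsLocalCondition f)
    (G : RestakingGraph 𝒮 𝒱) (hsec : G.Secure)
    (C : Set 𝒮) (hC : C ⊆ G.S) (hfCG : f C G) :
    ∃ G' : RestakingGraph 𝒮 𝒱,
      RestakingGraph.IsLocalVariant C G G' ∧ G'.Secure ∧ G'.Rloc C 0 = 1 := by
  obtain ⟨t, ht⟩ := G.finS.infinite_compl.nonempty
  obtain ⟨w, hw⟩ := G.finV.infinite_compl.nonempty
  obtain ⟨u, hu'⟩ := (G.finV.insert w).infinite_compl.nonempty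
  simp only [Set.mem_compl_iff] at ht hw hu'
  have hu : u ∉ G.V := fun h => hu' (Set.mem_insert_of_mem _ h)
  have huw : u ≠ w := fun h => hu' (h ▸ Set.mem_insert _ _)
  have htC : t ∉ C := fun h => ht (hC h)
  set Γ : Set 𝒱 := G.Gamma C with hΓdef
  have hΓV : Γ ⊆ G.V := fun v hv => hv.1
  have hΓfin : Γ.Finite := G.finV.subset hΓV
  have hg0 : 0 ≤ G.stakeSum Γ := G.stakeSum_nonneg' hΓV
  have hP0 : 0 ≤ G.piSum G.S := G.piSum_nonneg' subset_rfl
  set g : ℝ := G.stakeSum Γ with hgdef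
  set P : ℝ := G.piSum G.S with hPdef
  set G' := G.variant C t w u ht hw hu huw with hG'
  have hS' : G'.S = insert t G.S := rfl
  have hV' : G'.V = insert w (insert u G.V) := rfl
  have hE' : ∀ s v, G'.E s v ↔ (G.E s v ∨ (s = t ∧ v = w)) := fun s v => Iff.rfl
  have hπt : G'.pi t = g + 2 := by
    show Function.update G.pi t (G.stakeSum (G.Gamma C) + 2) t = g + 2
    rw [Function.update_self]
  have hπS : ∀ s ∈ G.S, G'.pi s = G.pi s := by
    intro s hs
    show Function.update G.pi t _ s = G.pi s
    rw [Function.update_of_ne (ne_of_mem_of_not_mem hs ht)]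
  have hαt : G'.alpha t = 1 := by
    show Function.update G.alpha t 1 t = 1
    rw [Function.update_self]
  have hαS : ∀ s ∈ G.S, G'.alpha s = G.alpha s := by
    intro s hs
    show Function.update G.alpha t 1 s = G.alpha s
    rw [Function.update_of_ne (ne_of_mem_of_not_mem hs ht)]
  have hstw : G'.stake w = P + g + 3 := by
    show Function.update (Function.update G.stake u 1) w _ w = P + g + 3
    rw [Function.update_self]
  have hstV : ∀ v ∈ G.V, G'.stake v = G.stake v := by
    intro v hv
    show Function.update (Function.update G.stake u 1) w _ v = G.stake v
    rw [Function.update_of_ne (ne_of_mem_of_not_mem hv hw),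
      Function.update_of_ne (ne_of_mem_of_not_mem hv hu)]
  have hstu : G'.stake u = 1 := by
    show Function.update (Function.update G.stake u 1) w _ u = 1
    rw [Function.update_of_ne huw, Function.update_self]
  -- stake sums over old sets agree
  have hσX : ∀ X ⊆ G.V, G'.stakeSum X = G.stakeSum X := by
    intro X hX
    exact finsum_mem_congr rfl (fun v hv => hstV v (hX hv))
  have hπX : ∀ X ⊆ G.S, G'.piSum X = G.piSum X := by
    intro X hX
    exact finsum_mem_congr rfl (fun s hs => hπS s (hX hs))
  -- neighborhoods
  have hNst : G'.Ns t = {w} := by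
    ext v
    simp only [Ns, Set.mem_setOf_eq, hE', Set.mem_singleton_iff]
    constructor
    · rintro (h | ⟨-, rfl⟩)
      · exact absurd (G.E_mem t v h).1 ht
      · rfl
    · rintro rfl; exact Or.inr (by simp)
  have hNss : ∀ s ∈ G.S, G'.Ns s = G.Ns s := by
    intro s hs
    ext v
    simp only [Ns, Set.mem_setOf_eq, hE']
    constructor
    · rintro (h | ⟨rfl, -⟩)
      · exact h
      · exact absurd hs ht
    · exact Or.inl
  have hNvv : ∀ v ∈ G.V, G'.Nv v = G.Nv v := by
    intro v hv
    ext s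
    simp only [Nv, Set.mem_setOf_eq, hE']
    constructor
    · rintro (h | ⟨-, rfl⟩)
      · exact h
      · exact absurd hv hw
    · exact Or.inl
  -- Γ of the variant
  have hΓ' : G'.Gamma C = insert u Γ := by
    ext v
    constructor
    · rintro ⟨hv, hsub⟩
      rcases Set.mem_insert_iff.1 hv with rfl | hv1
      · exact absurd (hsub (Or.inr ⟨rfl, rfl⟩)) htC
      rcases Set.mem_insert_iff.1 hv1 with rfl | hv2
      · exact Set.mem_insert _ _
      · refine Set.mem_insert_of_mem _ ⟨hv2, fun s hs => hsub ?_⟩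
        exact Or.inl hs
    · intro hmem
      rcases Set.mem_insert_iff.1 hmem with rfl | hv
      · refine ⟨Set.mem_insert_of_mem _ (Set.mem_insert _ _), ?_⟩
        rintro s (h | ⟨rfl, rfl⟩)
        · exact absurd (G.E_mem s _ h).2 hu
        · exact absurd rfl huw
      · refine ⟨Set.mem_insert_of_mem _ (Set.mem_insert_of_mem _ (hΓV hv)), ?_⟩
        rintro s (h | ⟨rfl, rfl⟩)
        · exact hv.2 h
        · exact absurd (hΓV hv) hw
  have huΓ : u ∉ Γ := fun h => hu (hΓV h)
  have hwΓ' : w ∉ G'.Gamma C := by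
    rw [hΓ']
    rintro (rfl | h)
    · exact huw rfl
    · exact hw (hΓV h)
  have hσΓ' : G'.stakeSum (G'.Gamma C) = 1 + g := by
    rw [hΓ']
    show ∑ᶠ v ∈ insert u Γ, G'.stake v = 1 + g
    rw [finsum_mem_insert _ huΓ hΓfin, hstu]
    have : ∑ᶠ v ∈ Γ, G'.stake v = g := hσX Γ hΓV
    rw [this]
  have hΓ'V : G'.Gamma C ⊆ G'.V := fun v hv => hv.1
  have hΓ'fin : (G'.Gamma C).Finite := G'.finV.subset hΓ'V
  have hstnn : ∀ v ∈ G'.V, 0 ≤ G'.stake v := G'.stake_nonneg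
  have hπS' : G'.piSum G'.S = (g + 2) + P := by
    show ∑ᶠ s ∈ insert t G.S, G'.pi s = (g + 2) + P
    rw [finsum_mem_insert _ ht G.finS, hπt]
    have : ∑ᶠ s ∈ G.S, G'.pi s = P := hπX G.S subset_rfl
    rw [this]
  refine ⟨G', ?_, ?_, ?_⟩
  · -- local variant
    refine ⟨fun s hs => Set.mem_insert_of_mem _ (hC hs), ?_, ?_, ?_⟩
    · -- NC equal
      unfold RestakingGraph.NC
      exact Set.iUnion₂_congr (fun s hs => (hNss s (hC hs)).symm)
    · exact fun s hs => ⟨(hπS s (hC hs)).symm, (hαS s (hC hs)).symm⟩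
    · intro v hv
      have hvV : v ∈ G.V := by
        obtain ⟨s, _, hsv⟩ := Set.mem_iUnion₂.1 hv
        exact (G.E_mem s v hsv).2
      exact ⟨(hstV v hvV).symm, (hNvv v hvV).symm⟩
  · -- secure
    rintro A B ⟨⟨hAS, hBV, -, hcond⟩, hlt⟩
    have hBfin : B.Finite := G'.finV.subset hBV
    have hBnn : ∀ v ∈ B, 0 ≤ G'.stake v := fun v hv => hstnn v (hBV hv)
    by_cases hwB : w ∈ B
    · -- B contains the huge validator
      have h1 : G'.stake w ≤ G'.stakeSum B := fs_single_le _ hBfin hwB hBnn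
      have h2 : G'.piSum A ≤ G'.piSum G'.S :=
        fs_mono _ hAS G'.finS (fun s hs => G'.pi_nonneg s hs)
      rw [hstw] at h1
      rw [hπS'] at h2
      -- stakeSum B < piSum A ≤ g+2+P but stakeSum B ≥ P+g+3
      linarith
    · by_cases htA : t ∈ A
      · have := hcond t htA
        rw [hαt, hNst, Set.diff_empty, one_mul] at this
        have hBw : B ∩ {w} = (∅ : Set 𝒱) := by
          rw [Set.inter_singleton_eq_empty.2 hwB]
        rw [hBw] at this
        have hs1 : G'.stakeSum ({w} : Set 𝒱) = P + g + 3 := by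
          show ∑ᶠ v ∈ ({w} : Set 𝒱), G'.stake v = P + g + 3
          rw [finsum_mem_singleton, hstw]
        have hs0 : G'.stakeSum (∅ : Set 𝒱) = 0 := finsum_mem_empty
        rw [hs1, hs0] at this
        linarith
      · -- reconstruct an attack on G
        have hAGS : A ⊆ G.S := by
          intro s hs
          rcases Set.mem_insert_iff.1 (hAS hs) with rfl | h
          · exact absurd hs htA
          · exact h
        refine hsec A (B ∩ G.V) ⟨⟨hAGS, Set.inter_subset_right, Set.disjoint_empty _, ?_⟩, ?_⟩
        · intro s hs
          have hsG := hAGS hs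
          have hNsV : G.Ns s ⊆ G.V := fun v hv => (G.E_mem s v hv).2
          have hc := hcond s hs
          rw [hαS s hsG, hNss s hsG, Set.diff_empty] at hc
          have e1 : G'.stakeSum (G.Ns s) = G.stakeSum (G.Ns s) := hσX _ hNsV
          have e2 : B ∩ G.Ns s = (B ∩ G.V) ∩ G.Ns s := by
            ext v
            constructor
            · rintro ⟨hvB, hvN⟩; exact ⟨⟨hvB, hNsV hvN⟩, hvN⟩
            · rintro ⟨⟨hvB, -⟩, hvN⟩; exact ⟨hvB, hvN⟩
          have e3 : G'.stakeSum (B ∩ G.Ns s) = G.stakeSum ((B ∩ G.V) ∩ G.Ns s) := by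
            rw [e2]
            exact hσX _ (fun v hv => hNsV hv.2)
          rw [e1, e3] at hc
          rw [Set.diff_empty]
          exact hc
        · have e4 : G.stakeSum (B ∩ G.V) = G'.stakeSum (B ∩ G.V) :=
            (hσX _ Set.inter_subset_right).symm
          have e5 : G'.stakeSum (B ∩ G.V) ≤ G'.stakeSum B :=
            fs_mono _ Set.inter_subset_left hBfin hBnn
          have e6 : G'.piSum A = G.piSum A := hπX A hAGS
          rw [e4, ← e6]
          linarith
  · -- Rloc = 1
    have hΓ'pos : (0 : ℝ) < G'.stakeSum (G'.Gamma C) := by rw [hσΓ']; linarith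
    unfold RestakingGraph.Rloc
    rw [zero_add]
    apply le_antisymm
    · apply Real.sSup_le
      · rintro r ⟨D, T, A, B, hDV, hDle, hcas, rfl⟩
        rw [div_le_one hΓ'pos]
        exact fs_mono _ Set.inter_subset_right hΓ'fin (fun v hv => hstnn v (hΓ'V hv))
      · norm_num
    · -- exhibit the cascade
      have hwD : w ∈ G'.V \ G'.Gamma C := ⟨Set.mem_insert _ _, hwΓ'⟩
      refine le_csSup ⟨1, ?_⟩ ?_
      · rintro r ⟨D, T, A, B, hDV, hDle, hcas, rfl⟩
        rw [div_le_one hΓ'pos]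
        exact fs_mono _ Set.inter_subset_right hΓ'fin (fun v hv => hstnn v (hΓ'V hv))
      · refine ⟨G'.V \ G'.Gamma C, 1, fun _ => {t}, fun _ => G'.Gamma C,
          Set.diff_subset, ?_, ?_, ?_⟩
        · have : (G'.V \ G'.Gamma C) ∩ G'.Gamma C = ∅ := Set.diff_inter_self
          rw [this]
          have h0 : G'.stakeSum (∅ : Set 𝒱) = 0 := finsum_mem_empty
          rw [h0, zero_div]
        · refine ⟨fun i j hij => absurd (Subsingleton.elim i j) hij,
            fun i j hij => absurd (Subsingleton.elim i j) hij, ?_⟩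
          intro τ
          have hprev : prevUnion (fun _ : Fin 1 => G'.Gamma C) τ = ∅ := by
            apply Set.eq_empty_iff_forall_notMem.2
            intro x hx
            obtain ⟨i, hi⟩ := Set.mem_iUnion.1 hx
            obtain ⟨hlt, -⟩ := Set.mem_iUnion.1 hi
            have hiτ : i = τ := Subsingleton.elim i τ
            exact absurd (hiτ ▸ hlt) (lt_irrefl τ)
          rw [hprev, Set.union_empty]
          refine ⟨⟨Set.singleton_subset_iff.2 (Set.mem_insert _ _), hΓ'V,
            Set.disjoint_sdiff_right, ?_⟩, ?_⟩
          · intro s hs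
            rw [Set.mem_singleton_iff] at hs
            subst hs
            rw [hNst]
            have h1 : ({w} : Set 𝒱) \ (G'.V \ G'.Gamma C) = ∅ :=
              Set.diff_eq_empty.2 (Set.singleton_subset_iff.2 hwD)
            have h2 : G'.Gamma C ∩ ({w} : Set 𝒱) = ∅ :=
              Set.inter_singleton_eq_empty.2 hwΓ'
            rw [h1, h2]
            have h0 : G'.stakeSum (∅ : Set 𝒱) = 0 := finsum_mem_empty
            rw [h0, mul_zero]
          · have hπt1 : G'.piSum ({t} : Set 𝒮) = g + 2 := by
              show ∑ᶠ s ∈ ({t} : Set 𝒮), G'.pi s = g + 2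
              rw [finsum_mem_singleton, hπt]
            rw [hπt1, hσΓ']
            linarith
        · rw [Set.iUnion_const, Set.inter_self, hσΓ', div_self (by linarith)]
end

section
/- Fix γ > 0. The Boolean function f that maps a restaking graph G and coalition C ⊆ S to 1 if and only if every attack header (X, Y) on G with X ⊆ C satisfies (1+γ)·π_X ≤ σ_Y is a local security condition; that is, f(C, G) = f(C, G') for every C-local variant G' of G. -/
section Aux

open Set

namespace RestakingGraph

variable {𝒮 𝒱 : Type}

lemma aux_finsum_mem_nonneg {α : Type*} {s : Set α} {f : α → ℝ} (h : ∀ x ∈ s, 0 ≤ f x) :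
    0 ≤ ∑ᶠ i ∈ s, f i := by
  rw [finsum_mem_def]
  exact finsum_nonneg fun x => Set.indicator_nonneg h x

lemma aux_localVariant_symm {C : Set 𝒮} {G G' : RestakingGraph 𝒮 𝒱}
    (hCS : C ⊆ G.S) (h : IsLocalVariant C G G') : IsLocalVariant C G' G := by
  obtain ⟨hC', hNC, hpa, hsv⟩ := h
  refine ⟨hCS, hNC.symm, fun s hs => ⟨(hpa s hs).1.symm, (hpa s hs).2.symm⟩, fun v hv => ?_⟩
  have hv' : v ∈ G.NC C := by rw [hNC]; exact hv
  exact ⟨(hsv v hv').1.symm, (hsv v hv').2.symm⟩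

lemma aux_mem_NC {G : RestakingGraph 𝒮 𝒱} {C : Set 𝒮} {s : 𝒮} {v : 𝒱}
    (hs : s ∈ C) (hv : v ∈ G.Ns s) : v ∈ G.NC C := by
  exact Set.mem_biUnion hs hv

lemma aux_NC_subset_V {G : RestakingGraph 𝒮 𝒱} {C : Set 𝒮} : G.NC C ⊆ G.V := by
  intro v hv
  simp only [NC, Set.mem_iUnion] at hv
  obtain ⟨s, _, hE⟩ := hv
  exact (G.E_mem s v hE).2

lemma aux_header_transfer (γ : ℝ) {C : Set 𝒮} {G G' : RestakingGraph 𝒮 𝒱}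
    (hCS : C ⊆ G.S) (h : IsLocalVariant C G G')
    (hf : ∀ X Y, G.IsAttackHeader X Y → X ⊆ C → (1 + γ) * G.piSum X ≤ G.stakeSum Y) :
    ∀ X Y, G'.IsAttackHeader X Y → X ⊆ C → (1 + γ) * G'.piSum X ≤ G'.stakeSum Y := by
  obtain ⟨hC', hNC, hpa, hsv⟩ := h
  -- neighborhoods of services in C agree
  have hNs : ∀ s ∈ C, G.Ns s = G'.Ns s := by
    intro s hs
    ext v
    constructor
    · intro hv
      have hvNC : v ∈ G.NC C := aux_mem_NC hs hv
      have := (hsv v hvNC).2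
      show v ∈ G'.Ns s
      have : s ∈ G'.Nv v := this ▸ hv
      exact this
    · intro hv
      have hvNC' : v ∈ G.NC C := by rw [hNC]; exact aux_mem_NC hs hv
      have hNvEq := (hsv v hvNC').2
      show v ∈ G.Ns s
      have : s ∈ G.Nv v := by rw [hNvEq]; exact hv
      exact this
  have hNCV : G.NC C ⊆ G.V := aux_NC_subset_V
  have hNCV' : G.NC C ⊆ G'.V := by rw [hNC]; exact aux_NC_subset_V
  -- stake sums over subsets of N(C) agree
  have hstake : ∀ T : Set 𝒱, T ⊆ G.NC C → G.stakeSum T = G'.stakeSum T := by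
    intro T hT
    exact finsum_mem_congr rfl fun v hv => (hsv v (hT hv)).1
  intro X Y hH hXC
  obtain ⟨hXS', hYΓ', B', hB'V, hB'Γ, hXS2, hBYV', hdisj', hcoal'⟩ := hH
  set Y₀ : Set 𝒱 := Y ∩ G.NC C with hY₀def
  set B : Set 𝒱 := (B' ∩ G.V) \ G.Gamma X with hBdef
  have hY₀NC : Y₀ ⊆ G.NC C := Set.inter_subset_right
  have hY₀Γ : Y₀ ⊆ G.Gamma X := by
    intro v hv
    obtain ⟨hvY, hvNC⟩ := hv
    have hvΓ' : v ∈ G'.Gamma X := hYΓ' hvY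
    refine ⟨hNCV hvNC, ?_⟩
    rw [(hsv v hvNC).2]
    exact hvΓ'.2
  have hΓV : G.Gamma X ⊆ G.V := fun v hv => hv.1
  -- key set identity
  have hkey : ∀ s ∈ X, (B ∪ Y₀) ∩ G.Ns s = (B' ∪ Y) ∩ G'.Ns s := by
    intro s hs
    have hsC : s ∈ C := hXC hs
    rw [← hNs s hsC]
    ext v
    constructor
    · rintro ⟨hv, hN⟩
      refine ⟨?_, hN⟩
      rcases hv with hv | hv
      · exact Or.inl hv.1.1
      · exact Or.inr hv.1
    · rintro ⟨hv, hN⟩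
      have hvNC : v ∈ G.NC C := aux_mem_NC hsC hN
      refine ⟨?_, hN⟩
      rcases hv with hv | hv
      · left
        refine ⟨⟨hv, hNCV hvNC⟩, ?_⟩
        intro hvΓ
        have hvΓ' : v ∈ G'.Gamma X := by
          refine ⟨hB'V hv, ?_⟩
          rw [← (hsv v hvNC).2]
          exact hvΓ.2
        have : v ∈ B' ∩ G'.Gamma X := ⟨hv, hvΓ'⟩
        rw [hB'Γ] at this
        exact this
      · exact Or.inr ⟨hv, hvNC⟩
  -- (X, Y₀) is an attack header on G
  have hheader : G.IsAttackHeader X Y₀ := by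
    refine ⟨hXC.trans hCS, hY₀Γ, B, fun v hv => hv.1.2, ?_, ?_⟩
    · ext v
      simp only [hBdef, Set.mem_inter_iff, Set.mem_diff, Set.mem_empty_iff_false, iff_false]
      rintro ⟨⟨_, hvΓ⟩, hvΓ'⟩
      exact hvΓ hvΓ'
    · refine ⟨hXC.trans hCS, ?_, Set.disjoint_empty _, ?_⟩
      · rintro v (hv | hv)
        · exact hv.1.2
        · exact hΓV (hY₀Γ hv)
      · intro s hs
        have hsC : s ∈ C := hXC hs
        have h1 := hcoal' s hs
        rw [Set.diff_empty] at h1 ⊢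
        have hα : G.alpha s = G'.alpha s := (hpa s hsC).2
        have hNssub : G.Ns s ⊆ G.NC C := fun v hv => aux_mem_NC hsC hv
        have hNsEq : G.stakeSum (G.Ns s) = G'.stakeSum (G'.Ns s) := by
          rw [← hNs s hsC]
          exact hstake _ hNssub
        have hRHS : G.stakeSum ((B ∪ Y₀) ∩ G.Ns s) = G'.stakeSum ((B' ∪ Y) ∩ G'.Ns s) := by
          rw [hkey s hs, ← hNs s hsC]
          exact hstake _ (Set.inter_subset_right.trans hNssub)
        rw [hα, hNsEq, hRHS]
        exact h1
  have hmain := hf X Y₀ hheader hXC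
  -- transfer the sums
  have hpiEq : G.piSum X = G'.piSum X :=
    finsum_mem_congr rfl fun s hs => (hpa s (hXC hs)).1
  have hY₀Eq : G.stakeSum Y₀ = G'.stakeSum Y₀ := hstake _ hY₀NC
  have hYfin : Y.Finite := G'.finV.subset fun v hv => (hYΓ' hv).1
  have hYsplit : G'.stakeSum Y = G'.stakeSum Y₀ + G'.stakeSum (Y \ Y₀) := by
    have hU : Y₀ ∪ (Y \ Y₀) = Y := Set.union_diff_cancel Set.inter_subset_left
    calc G'.stakeSum Y = G'.stakeSum (Y₀ ∪ (Y \ Y₀)) := by rw [hU]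
      _ = G'.stakeSum Y₀ + G'.stakeSum (Y \ Y₀) :=
        finsum_mem_union disjoint_sdiff_self_right (hYfin.subset Set.inter_subset_left)
          (hYfin.subset Set.diff_subset)
  have hnonneg : 0 ≤ G'.stakeSum (Y \ Y₀) := by
    refine aux_finsum_mem_nonneg fun v hv => ?_
    exact G'.stake_nonneg v (hYΓ' hv.1).1
  calc (1 + γ) * G'.piSum X = (1 + γ) * G.piSum X := by rw [hpiEq]
    _ ≤ G.stakeSum Y₀ := hmain
    _ = G'.stakeSum Y₀ := hY₀Eq
    _ ≤ G'.stakeSum Y := by rw [hYsplit]; linarith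

end RestakingGraph

end Aux

/-- Overcollateralization of attack headers is a local
security condition. For fixed `γ > 0`, the condition mapping `(C, G)` to
"every attack header `(X, Y)` on `G` with `X ⊆ C` satisfies
`(1+γ)·π_X ≤ σ_Y`" is a local security condition. -/
theorem header_condition_is_local {𝒮 𝒱 : Type} (γ : ℝ) (hγ : 0 < γ) :
    RestakingGraph.IsLocalCondition (fun (C : Set 𝒮) (G : RestakingGraph 𝒮 𝒱) =>
      ∀ X Y, G.IsAttackHeader X Y → X ⊆ C →
        (1 + γ) * G.piSum X ≤ G.stakeSum Y) := by
  intro C G G' hCS hvar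
  constructor
  · intro hf
    exact RestakingGraph.aux_header_transfer γ hCS hvar hf
  · intro hf
    exact RestakingGraph.aux_header_transfer γ hvar.1
      (RestakingGraph.aux_localVariant_symm hCS hvar) hf
end
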